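/- For any vector r ∈ ℝ^{N−1} with entries r_2,…,r_N, the polynomial λ(τ) = ∑_{i=1}^N (A† r)_i L_i(τ) satisfies λ(1) = −w_N ∑_{i=2}^{N−1} M_i(1) r_i + w_N r_N. -/

import Mathlib

open Polynomial

/-- `lagL τ i` is the `i`-th Lagrange basis polynomial (of degree `N - 1`)
for the nodes `τ 0, …, τ (N-1)`, satisfying `(lagL τ i).eval (τ j) = δᵢⱼ`. -/
noncomputable def lagL {N : ℕ} (τ : Fin N → ℝ) (i : Fin N) : ℝ[X] :=
  Lagrange.basis Finset.univ τ i

/-- `lagLp τ` is the polynomial `L_p(x) = ∏ᵢ (x - τᵢ)`. -/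
noncomputable def lagLp {N : ℕ} (τ : Fin N → ℝ) : ℝ[X] :=
  ∏ i, (X - C (τ i))

/-- The differentiation matrix `D`, with `D i j = L_j'(τ i)`. -/
noncomputable def matD {N : ℕ} (τ : Fin N → ℝ) : Matrix (Fin N) (Fin N) ℝ :=
  fun i j => (derivative (lagL τ j)).eval (τ i)

/-- The vector `D_p`, with `(D_p) i = L_p'(τ i)`. -/
noncomputable def vecDp {N : ℕ} (τ : Fin N → ℝ) : Fin N → ℝ :=
  fun i => (derivative (lagLp τ)).eval (τ i)

/-- Columns `2, …, N+1` (in 1-based numbering) of the augmented differentiation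
matrix `D̃ = [D  D_p]`: column `j` (0-based, `j < N - 1`) is column `j + 1` of `D`,
and the last column is `D_p`. -/
noncomputable def matDtil2 {N : ℕ} (τ : Fin N → ℝ) : Matrix (Fin N) (Fin N) ℝ :=
  fun i j => if h : (j : ℕ) + 1 < N then matD τ i ⟨(j : ℕ) + 1, h⟩ else vecDp τ i

/-- The quadrature rule with nodes `τ` and weights `w` integrates exactly all
polynomials of degree at most `2 * N - 3` over `[-1, 1]`. -/
def IsQuadrature {N : ℕ} (τ : Fin N → ℝ) (w : Fin N → ℝ) : Prop :=
  ∀ p : ℝ[X], p.natDegree ≤ 2 * N - 3 →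
    ∑ i, w i * p.eval (τ i) = ∫ t in (-1 : ℝ)..1, p.eval t

/-- The integration matrix `A` with rows indexed (0-based) by `i : Fin (N-1)`
corresponding to the node `τ (i+1)`: `A i j = ∫_{-1}^{τ (i+1)} L_j(t) dt`. -/
noncomputable def matA {N : ℕ} (τ : Fin N → ℝ) : Matrix (Fin (N - 1)) (Fin N) ℝ :=
  fun i j => ∫ t in (-1 : ℝ)..(τ ⟨(i : ℕ) + 1, by have := i.isLt; omega⟩), (lagL τ j).eval t

/-- The row vector `A_p`, with `(A_p) j = (1/N) ∏_{k ≠ j} 1 / (τ j - τ k)`. -/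
noncomputable def rowAp {N : ℕ} (τ : Fin N → ℝ) : Fin N → ℝ :=
  fun j => (1 / (N : ℝ)) * ∏ k ∈ Finset.univ.erase j, (τ j - τ k)⁻¹

/-- The matrix `Ã` obtained by stacking `A` on top of the row vector `A_p`. -/
noncomputable def matAtil {N : ℕ} (τ : Fin N → ℝ) : Matrix (Fin N) (Fin N) ℝ :=
  fun i j => if h : (i : ℕ) + 1 < N then matA τ ⟨(i : ℕ), by omega⟩ j else rowAp τ j

/-- The adjoint integration matrix `A† = W⁻¹ Aᵀ W_{2:N}`, with columns indexed
(0-based) by `j : Fin (N-1)` corresponding to the node `τ (j+1)`. -/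
noncomputable def matAdag {N : ℕ} (τ : Fin N → ℝ) (w : Fin N → ℝ) :
    Matrix (Fin N) (Fin (N - 1)) ℝ :=
  fun i j => (w i)⁻¹ * matA τ j i * w ⟨(j : ℕ) + 1, by have := j.isLt; omega⟩

/-- `polyM τ k` is the Lagrange basis polynomial (of degree `N - 3`) for the
interior nodes `τ 1, …, τ (N-2)`, satisfying `(polyM τ k).eval (τ m) = δₖₘ`
for interior indices `m`. -/
noncomputable def polyM {N : ℕ} (τ : Fin N → ℝ) (k : Fin N) : ℝ[X] :=
  Lagrange.basis (Finset.univ.filter fun m : Fin N => 0 < (m : ℕ) ∧ (m : ℕ) < N - 1) τ k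

/-- The polynomial `λ(x) = ∑ᵢ (A† r)ᵢ Lᵢ(x)`. -/
noncomputable def lamP {N : ℕ} (τ : Fin N → ℝ) (w : Fin N → ℝ) (r : Fin (N - 1) → ℝ) : ℝ[X] :=
  ∑ i, C ((matAdag τ w).mulVec r i) * lagL τ i

noncomputable def pint (p : ℝ[X]) : ℝ[X] := p.sum fun n a => C (a / (n+1)) * X^(n+1)

lemma derivative_pint (p : ℝ[X]) : derivative (pint p) = p := by
  rw [pint, Polynomial.sum, map_sum]
  conv_rhs => rw [← Polynomial.sum_C_mul_X_pow_eq p, Polynomial.sum]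
  refine Finset.sum_congr rfl fun n _ => ?_
  rw [derivative_C_mul, derivative_X_pow, ← mul_assoc, ← C_mul, Nat.add_sub_cancel]
  congr 2
  push_cast
  rw [div_mul_cancel₀]
  positivity

lemma natDegree_pint_le (p : ℝ[X]) : (pint p).natDegree ≤ p.natDegree + 1 := by
  rw [pint, Polynomial.sum]
  refine (natDegree_sum_le _ _).trans ?_
  rw [Finset.fold_max_le]
  refine ⟨Nat.zero_le _, fun n hn => ?_⟩
  refine (natDegree_C_mul_le _ _).trans ?_
  rw [natDegree_X_pow]
  exact Nat.add_le_add_right (le_natDegree_of_mem_supp n hn) 1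

lemma integral_eval_derivative (P : ℝ[X]) (a b : ℝ) :
    ∫ t in a..b, (derivative P).eval t = P.eval b - P.eval a := by
  refine intervalIntegral.integral_eq_sub_of_hasDerivAt (fun x _ => P.hasDerivAt x) ?_
  exact (derivative P).continuous.intervalIntegrable a b

lemma integral_eval (p : ℝ[X]) (a b : ℝ) :
    ∫ t in a..b, p.eval t = (pint p).eval b - (pint p).eval a := by
  conv_lhs => rw [← derivative_pint p]
  exact integral_eval_derivative _ a b

set_option maxHeartbeats 1000000 in
/-- `λ(1) = -w_N ∑_{i=2}^{N-1} Mᵢ(1) rᵢ + w_N r_N`. -/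
theorem stmt12 (N : ℕ) (hN : 3 ≤ N) (τ : Fin N → ℝ) (hmono : StrictMono τ)
    (h0 : τ ⟨0, by omega⟩ = -1) (h1 : τ ⟨N - 1, by omega⟩ = 1) (w : Fin N → ℝ) (hw : ∀ i, 0 < w i) (hquad : IsQuadrature τ w) :
    ∀ r : Fin (N - 1) → ℝ,
      (lamP τ w r).eval 1 =
        - w ⟨N - 1, by omega⟩ *
            (∑ k ∈ Finset.univ.filter (fun k : Fin N => 0 < (k : ℕ) ∧ (k : ℕ) < N - 1),
              (polyM τ k).eval 1 * r ⟨(k : ℕ) - 1, by have := k.isLt; omega⟩)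
          + w ⟨N - 1, by omega⟩ * r ⟨N - 2, by omega⟩ := by
  intro r
  have hNlt : N - 1 < N := by omega
  set last : Fin N := ⟨N - 1, hNlt⟩ with hlastdef
  set z : Fin N := ⟨0, by omega⟩ with hzdef
  have hlastval : (last : ℕ) = N - 1 := rfl
  have hzval : (z : ℕ) = 0 := rfl
  have h1' : τ last = 1 := h1
  have h0' : τ z = -1 := h0
  have hzlast : z ≠ last := by
    intro h
    rw [Fin.ext_iff] at h
    omega
  have hinj : Set.InjOn τ (Finset.univ : Finset (Fin N)) := hmono.injective.injOn
  have hLL : ∀ i j : Fin N, (lagL τ i).eval (τ j) = if i = j then 1 else 0 := by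
    intro i j
    split_ifs with h
    · subst h; exact Lagrange.eval_basis_self hinj (Finset.mem_univ _)
    · exact Lagrange.eval_basis_of_ne h (Finset.mem_univ _)
  have hdegL : ∀ i, (lagL τ i).natDegree = N - 1 := fun i => by
    rw [lagL, Lagrange.natDegree_basis hinj (Finset.mem_univ i), Finset.card_univ,
      Fintype.card_fin]
  set s := Finset.univ.filter (fun m : Fin N => 0 < (m : ℕ) ∧ (m : ℕ) < N - 1) with hsdef
  have hssub : s ⊆ (Finset.univ.erase z).erase last := by
    intro i hi
    rw [hsdef, Finset.mem_filter] at hi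
    refine Finset.mem_erase.mpr ⟨fun h => ?_, Finset.mem_erase.mpr ⟨fun h => ?_,
      Finset.mem_univ i⟩⟩
    · rw [h] at hi; omega
    · rw [h] at hi; omega
  have hscard : s.card ≤ N - 2 := by
    refine (Finset.card_le_card hssub).trans ?_
    rw [Finset.card_erase_of_mem (Finset.mem_erase.mpr ⟨Ne.symm hzlast, Finset.mem_univ _⟩),
      Finset.card_erase_of_mem (Finset.mem_univ z), Finset.card_univ, Fintype.card_fin]
    omega
  have hsinj : Set.InjOn τ s := hmono.injective.injOn
  set Fp : ℝ[X] := pint (lagL τ last) - C ((pint (lagL τ last)).eval (-1)) with hFpdef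
  have hFeval : ∀ x : ℝ, Fp.eval x = ∫ t in (-1:ℝ)..x, (lagL τ last).eval t := fun x => by
    rw [integral_eval]; simp [hFpdef]
  have hdF : derivative Fp = lagL τ last := by
    rw [hFpdef, derivative_sub, derivative_C, sub_zero, derivative_pint]
  have hdegF : Fp.natDegree ≤ N := by
    rw [hFpdef]
    refine (natDegree_sub_le _ _).trans ?_
    have := natDegree_pint_le (lagL τ last)
    rw [hdegL] at this
    simp only [natDegree_C, max_le_iff]
    omega
  have hFz : Fp.eval (τ z) = 0 := by
    rw [h0', hFeval, intervalIntegral.integral_same]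
  have hsumL : ∀ q : ℝ[X], ∑ i, w i * (lagL τ last * q).eval (τ i) = w last * q.eval 1 := by
    intro q
    rw [Finset.sum_eq_single last]
    · rw [eval_mul, hLL last last, if_pos rfl, one_mul, h1']
    · intro i _ hne
      rw [eval_mul, hLL last i, if_neg (Ne.symm hne), zero_mul, mul_zero]
    · exact fun h => absurd (Finset.mem_univ last) h
  have hquadL : Fp.eval (τ last) = w last := by
    have h := hquad (lagL τ last) (by rw [hdegL]; omega)
    have h2 := hsumL 1
    rw [mul_one, eval_one, mul_one] at h2
    rw [h1', hFeval 1, ← h, ← h2]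
  -- key fact B
  have hB : ∀ m ∈ s, (w m) * Fp.eval (τ m) = -(w last * w last * (polyM τ m).eval 1) := by
    intro m hm
    have hdegM : (polyM τ m).natDegree ≤ N - 3 := by
      rw [polyM, ← hsdef, Lagrange.natDegree_basis hsinj hm]
      omega
    have hdegQ : (pint (polyM τ m)).natDegree ≤ N - 2 := by
      have := natDegree_pint_le (polyM τ m); omega
    have hint0 : ∫ t in (-1:ℝ)..1, (Fp * polyM τ m).eval t = 0 := by
      have hd : derivative (Fp * pint (polyM τ m))
          = lagL τ last * pint (polyM τ m) + Fp * polyM τ m := by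
        rw [derivative_mul, hdF, derivative_pint]
      have e1 : (∫ t in (-1:ℝ)..1, (lagL τ last * pint (polyM τ m)).eval t)
            + ∫ t in (-1:ℝ)..1, (Fp * polyM τ m).eval t
          = (Fp * pint (polyM τ m)).eval 1 - (Fp * pint (polyM τ m)).eval (-1) := by
        rw [← integral_eval_derivative (Fp * pint (polyM τ m)) (-1) 1, hd]
        rw [← intervalIntegral.integral_add
          ((lagL τ last * pint (polyM τ m)).continuous.intervalIntegrable _ _)
          ((Fp * polyM τ m).continuous.intervalIntegrable _ _)]
        simp [eval_add]
      have e2 : ∫ t in (-1:ℝ)..1, (lagL τ last * pint (polyM τ m)).eval t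
          = w last * (pint (polyM τ m)).eval 1 := by
        rw [← hquad (lagL τ last * pint (polyM τ m))
          ((natDegree_mul_le).trans (by have := hdegL last; omega))]
        exact hsumL (pint (polyM τ m))
      have e3 : (Fp * pint (polyM τ m)).eval 1 = w last * (pint (polyM τ m)).eval 1 := by
        rw [eval_mul, ← h1', hquadL, h1']
      have e4 : (Fp * pint (polyM τ m)).eval (-1) = 0 := by
        rw [eval_mul, ← h0', hFz, zero_mul]
      linarith
    have h2 := hquad (Fp * polyM τ m) ((natDegree_mul_le).trans (by omega))
    rw [hint0] at h2
    have hMval : ∀ k ∈ s, (polyM τ m).eval (τ k) = if m = k then 1 else 0 := by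
      intro k hk
      split_ifs with h
      · subst h
        exact Lagrange.eval_basis_self hsinj (hsdef ▸ hm)
      · exact Lagrange.eval_basis_of_ne h (hsdef ▸ hk)
    have hsum_s : ∑ i ∈ s, w i * (Fp * polyM τ m).eval (τ i) = w m * Fp.eval (τ m) := by
      rw [Finset.sum_eq_single_of_mem m hm]
      · rw [eval_mul, hMval m hm, if_pos rfl, mul_one]
      · intro i hi hne
        rw [eval_mul, hMval i hi, if_neg (Ne.symm hne), mul_zero, mul_zero]
    have hnotset : Finset.univ.filter (fun m : Fin N => ¬(0 < (m : ℕ) ∧ (m : ℕ) < N - 1))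
        = {z, last} := by
      ext i
      simp only [Finset.mem_filter, Finset.mem_univ, true_and, Finset.mem_insert,
        Finset.mem_singleton, Fin.ext_iff]
      have := i.isLt
      omega
    have hsum_pair : ∑ i ∈ ({z, last} : Finset (Fin N)), w i * (Fp * polyM τ m).eval (τ i)
        = w last * (w last * (polyM τ m).eval 1) := by
      rw [Finset.sum_pair hzlast, eval_mul, hFz, zero_mul, mul_zero, zero_add,
        eval_mul, hquadL, h1']
    have hsplit := Finset.sum_filter_add_sum_filter_not Finset.univ
      (fun m : Fin N => 0 < (m : ℕ) ∧ (m : ℕ) < N - 1)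
      (fun i => w i * (Fp * polyM τ m).eval (τ i))
    rw [← hsdef, hnotset, hsum_s, hsum_pair, h2] at hsplit
    linarith
  have hwl := (hw last).ne'
  have hlam : (lamP τ w r).eval 1 = (matAdag τ w).mulVec r last := by
    rw [lamP, eval_finset_sum, Finset.sum_eq_single last]
    · rw [eval_mul, eval_C, ← h1', hLL last last, if_pos rfl, mul_one]
    · intro i _ hne
      rw [eval_mul, eval_C, ← h1', hLL i last, if_neg hne, mul_zero]
    · exact fun h => absurd (Finset.mem_univ last) h
  have hmv : (matAdag τ w).mulVec r last
      = ∑ j : Fin (N - 1), (w last)⁻¹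
          * Fp.eval (τ ⟨(j : ℕ) + 1, by have := j.isLt; omega⟩)
          * w ⟨(j : ℕ) + 1, by have := j.isLt; omega⟩ * r j := by
    simp only [Matrix.mulVec, dotProduct, matAdag, matA]
    refine Finset.sum_congr rfl fun j _ => ?_
    rw [← hFeval]
  rw [hlam, hmv]
  have hre : ∑ j : Fin (N - 1), (w last)⁻¹
          * Fp.eval (τ ⟨(j : ℕ) + 1, by have := j.isLt; omega⟩)
          * w ⟨(j : ℕ) + 1, by have := j.isLt; omega⟩ * r j
      = ∑ i ∈ Finset.univ.filter (fun i : Fin N => 0 < (i : ℕ)),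
          (w last)⁻¹ * Fp.eval (τ i) * w i * r ⟨(i : ℕ) - 1, by have := i.isLt; omega⟩ := by
    refine Finset.sum_nbij' (fun j : Fin (N - 1) => (⟨(j : ℕ) + 1, by have := j.isLt; omega⟩ : Fin N))
      (fun i : Fin N => (⟨(i : ℕ) - 1, by have := i.isLt; omega⟩ : Fin (N - 1))) ?_ ?_ ?_ ?_ ?_
    · intro j _
      simp only [Finset.mem_filter, Finset.mem_univ, true_and]
      omega
    · intro i _; exact Finset.mem_univ _
    · intro j _; exact Fin.ext (by simp)
    · intro i hi
      simp only [Finset.mem_filter, Finset.mem_univ, true_and] at hi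
      exact Fin.ext (by simp; omega)
    · intro j _
      rfl
  rw [hre]
  have hsplit2 := Finset.sum_filter_add_sum_filter_not
    (Finset.univ.filter (fun i : Fin N => 0 < (i : ℕ)))
    (fun i : Fin N => (i : ℕ) < N - 1)
    (fun i => (w last)⁻¹ * Fp.eval (τ i) * w i * r ⟨(i : ℕ) - 1, by have := i.isLt; omega⟩)
  have hfe : (Finset.univ.filter (fun i : Fin N => 0 < (i : ℕ))).filter
      (fun i : Fin N => (i : ℕ) < N - 1) = s := by
    rw [hsdef, Finset.filter_filter]
  have hfne : (Finset.univ.filter (fun i : Fin N => 0 < (i : ℕ))).filter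
      (fun i : Fin N => ¬((i : ℕ) < N - 1)) = {last} := by
    ext i
    simp only [Finset.filter_filter, Finset.mem_filter, Finset.mem_univ, true_and,
      Finset.mem_singleton, Fin.ext_iff]
    have := i.isLt
    omega
  rw [hfe, hfne, Finset.sum_singleton] at hsplit2
  rw [← hsplit2]
  have hterm_last : (w last)⁻¹ * Fp.eval (τ last) * w last
      * r ⟨(last : ℕ) - 1, by have := last.isLt; omega⟩
      = w last * r ⟨N - 2, by omega⟩ := by
    rw [hquadL]
    have he : (⟨(last : ℕ) - 1, by have := last.isLt; omega⟩ : Fin (N - 1))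
        = ⟨N - 2, by omega⟩ := Fin.ext (by simp only [hlastval]; omega)
    rw [he, inv_mul_cancel₀ hwl, one_mul]
  have hterm_s : ∑ i ∈ s, (w last)⁻¹ * Fp.eval (τ i) * w i
        * r ⟨(i : ℕ) - 1, by have := i.isLt; omega⟩
      = - w last * ∑ k ∈ s, (polyM τ k).eval 1 * r ⟨(k : ℕ) - 1, by have := k.isLt; omega⟩ := by
    rw [Finset.mul_sum]
    refine Finset.sum_congr rfl fun i hi => ?_
    have hb := hB i hi
    have hwi := (hw i).ne'
    have key : (w last)⁻¹ * Fp.eval (τ i) * w i = -(w last * (polyM τ i).eval 1) := by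
      have e : (w last)⁻¹ * Fp.eval (τ i) * w i = (w last)⁻¹ * (w i * Fp.eval (τ i)) := by ring
      rw [e, hb]
      field_simp
    rw [key]
    ring
  rw [hterm_s, hterm_last]
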